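/- The canonical structure is a recursive causal model: for every maximally L′_C-consistent set Γ of L′_C formulas, the pair ⟨F^Γ, A^Γ⟩ is a recursive causal model, i.e., (i) the valuation A^Γ complies with the structural functions F^Γ, and (ii) F^Γ is recursive (the transitive closure of its direct causal dependence relation is asymmetric and transitive). -/

import Mathlib

open Classical

/-- A finite signature: variables sorted into exogenous and endogenous, each with a
finite nonempty range of values. -/
structure Sig : Type 1 where
  Var : Type
  exo : Var → Prop
  Val : Var → Type
  [decEqVar : DecidableEq Var]
  [finVar : Fintype Var]
  [neVar : Nonempty Var]
  [decEqVal : ∀ X : Var, DecidableEq (Val X)]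
  [finVal : ∀ X : Var, Fintype (Val X)]
  [neVal : ∀ X : Var, Nonempty (Val X)]

attribute [instance] Sig.decEqVar Sig.finVar Sig.neVar Sig.decEqVal Sig.finVal Sig.neVal

variable {S : Sig}

/-- A valuation: a value for each variable. -/
abbrev Env (S : Sig) : Type := ∀ X : S.Var, S.Val X

instance : Nonempty (Env S) := ⟨fun X => Classical.arbitrary (S.Val X)⟩

/-- Values for all variables other than `V`. -/
abbrev Others (S : Sig) (V : S.Var) : Type := ∀ X : {X : S.Var // X ≠ V}, S.Val X.val

/-- The restriction of a valuation to the variables other than `V`. -/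
def Env.restrict (A : Env S) (V : S.Var) : Others S V := fun X => A X.val

/-- A family of structural functions (only the components at endogenous variables
are meaningful). -/
abbrev StructFuns (S : Sig) : Type := ∀ V : S.Var, Others S V → S.Val V

/-- A valuation complies with the structural functions: the value of each endogenous
variable is obtained by applying its structural function to the values of all
other variables. -/
def Complies (F : StructFuns S) (A : Env S) : Prop :=
  ∀ V : S.Var, ¬ S.exo V → A V = F V (A.restrict V)

/-- The endogenous variable `V` is directly causally affected by `X` under `F`. -/
def DirAff (F : StructFuns S) (X V : S.Var) : Prop :=
  ¬ S.exo V ∧ ∃ (h : X ≠ V) (g : Others S V) (x₁ x₂ : S.Val X),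
    x₁ ≠ x₂ ∧
      F V (Function.update g ⟨X, h⟩ x₁) ≠ F V (Function.update g ⟨X, h⟩ x₂)

/-- `F` is recursive: the transitive closure of the direct causal dependence
relation is asymmetric (transitivity is automatic for `Relation.TransGen`). -/
def RecursiveF (F : StructFuns S) : Prop :=
  ∀ a b : S.Var, Relation.TransGen (DirAff F) a b → ¬ Relation.TransGen (DirAff F) b a

/-- An assignment of values to a set of pairwise distinct variables. -/
abbrev Intervention (S : Sig) : Type := ∀ X : S.Var, Option (S.Val X)

/-- The empty assignment. -/
def iEmpty (S : Sig) : Intervention S := fun _ => none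

/-- Extend an assignment by additionally setting `Y` to `y` (overriding). -/
def iUpd (I : Intervention S) (Y : S.Var) (y : S.Val Y) : Intervention S :=
  Function.update I Y (some y)

/-- Combine assignments, the second overriding the first:  `[X⃗ := x⃗, Y⃗ := y⃗]`. -/
def icomp (I J : Intervention S) : Intervention S := fun W =>
  match J W with
  | some v => some v
  | none => I W

/-- The intervened family of structural functions: intervened variables get the
constant function returning the assigned value; the rest are unchanged. -/
def intF (F : StructFuns S) (I : Intervention S) : StructFuns S :=
  fun V g => (I V).getD (F V g)

/-- `A'` is the result of intervening with `I` on the valuation `A` (w.r.t. `F`):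
exogenous intervened variables get the assigned value, exogenous non-intervened
variables keep their value, and each endogenous variable complies with its new
structural function. -/
def IntervenedVal (F : StructFuns S) (A : Env S) (I : Intervention S) (A' : Env S) : Prop :=
  (∀ X : S.Var, S.exo X → ∀ v : S.Val X, I X = some v → A' X = v) ∧
  (∀ X : S.Var, S.exo X → I X = none → A' X = A X) ∧
  (∀ V : S.Var, ¬ S.exo V → A' V = intF F I V (A'.restrict V))

/-- The intervened valuation (unique when `F` is recursive). -/
noncomputable def intVal (F : StructFuns S) (A : Env S) (I : Intervention S) : Env S :=
  Classical.epsilon (IntervenedVal F A I)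

/-- The language L_C: atoms `Y = y`, negation, conjunction, interventionist
counterfactual operators. -/
inductive Form (S : Sig) : Type where
  | eq (Y : S.Var) (y : S.Val Y) : Form S
  | neg (φ : Form S) : Form S
  | conj (φ ψ : Form S) : Form S
  | int (I : Intervention S) (φ : Form S) : Form S

namespace Form

/-- Material implication, defined from `¬` and `∧` as usual. -/
def impl (φ ψ : Form S) : Form S := Form.neg (Form.conj φ (Form.neg ψ))

/-- Disjunction, defined from `¬` and `∧` as usual. -/
def orF (φ ψ : Form S) : Form S := Form.neg (Form.conj (Form.neg φ) (Form.neg ψ))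

/-- Biconditional. -/
def iffF (φ ψ : Form S) : Form S := Form.conj (impl φ ψ) (impl ψ φ)

end Form

/-- A canonical contradiction. -/
noncomputable def botF (S : Sig) : Form S :=
  let X : S.Var := Classical.arbitrary S.Var
  let x : S.Val X := Classical.arbitrary (S.Val X)
  Form.conj (Form.eq X x) (Form.neg (Form.eq X x))

/-- A canonical tautology. -/
noncomputable def topF (S : Sig) : Form S := Form.neg (botF S)

/-- Disjunction of a list of formulas (the empty disjunction is a contradiction). -/
noncomputable def bigOr : List (Form S) → Form S
  | [] => botF S
  | φ :: l => l.foldl Form.orF φ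

/-- Conjunction of a list of formulas (the empty conjunction is a tautology). -/
noncomputable def bigConj : List (Form S) → Form S
  | [] => topF S
  | φ :: l => l.foldl Form.conj φ

/-- `φ` is an instance of a propositional tautology: it evaluates to `true` under
every Boolean valuation that respects negation and conjunction (treating all
other formulas as atoms). -/
def Tauto (φ : Form S) : Prop :=
  ∀ v : Form S → Bool,
    (∀ ψ : Form S, v (Form.neg ψ) = !(v ψ)) →
    (∀ ψ χ : Form S, v (Form.conj ψ χ) = (v ψ && v χ)) →
    v φ = true

/-- The assignment `[Z⃗ := z⃗, X := x]` where `Z⃗` lists all variables other than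
`X` and `V`, used in the formula `X ⇝ V`. -/
def ltInt (X V : S.Var) (g : ∀ W : {W : S.Var // W ≠ X ∧ W ≠ V}, S.Val W.val)
    (x : S.Val X) : Intervention S := fun W =>
  if h : W = X then some (h.symm ▸ x)
  else if h' : W = V then none
  else some (g ⟨W, ⟨h, h'⟩⟩)

/-- The formula `X ⇝ V`: the disjunction, over tuples `z⃗` of values for all
variables other than `X` and `V`, distinct values `x₁ ≠ x₂` of `X` and distinct
values `v₁ ≠ v₂` of `V`, of `[Z⃗:=z⃗, X:=x₁]V=v₁ ∧ [Z⃗:=z⃗, X:=x₂]V=v₂`. -/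
noncomputable def leadsTo (X V : S.Var) : Form S :=
  bigOr ((Finset.univ.filter
      (fun p : (∀ W : {W : S.Var // W ≠ X ∧ W ≠ V}, S.Val W.val) ×
          (S.Val X × S.Val X) × (S.Val V × S.Val V) =>
        p.2.1.1 ≠ p.2.1.2 ∧ p.2.2.1 ≠ p.2.2.2)).toList.map
    (fun p =>
      Form.conj
        (Form.int (ltInt X V p.1 p.2.1.1) (Form.eq V p.2.2.1))
        (Form.int (ltInt X V p.1 p.2.1.2) (Form.eq V p.2.2.2))))

/-- The chain `X₀ ⇝ X₁ ∧ ⋯ ∧ X_k ⇝ X_{k+1}`. -/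
noncomputable def chainConj (X : ℕ → S.Var) : ℕ → Form S
  | 0 => leadsTo (X 0) (X 1)
  | n + 1 => Form.conj (chainConj X n) (leadsTo (X (n + 1)) (X (n + 2)))

/-- `ψ₁ → (ψ₂ → ⋯ → (ψₙ → φ))` for a list of premises. -/
def impsFrom : List (Form S) → Form S → Form S
  | [], φ => φ
  | ψ :: l, φ => Form.impl ψ (impsFrom l φ)

/-- Satisfaction of an L_C formula in a causal model `⟨F, A⟩`. -/
def SatC : Form S → StructFuns S → Env S → Prop
  | Form.eq Y y, _, A => A Y = y
  | Form.neg φ, F, A => ¬ SatC φ F A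
  | Form.conj φ ψ, F, A => SatC φ F A ∧ SatC ψ F A
  | Form.int I φ, F, A => SatC φ (intF F I) (intVal F A I)

/-- The proof system L′_C: propositional tautologies, modus ponens, and the
axiom schemes A1–A7. -/
inductive ThmC' : Form S → Prop where
  | taut : ∀ {φ : Form S}, Tauto φ → ThmC' φ
  | mp : ∀ {φ ψ : Form S}, ThmC' (Form.impl φ ψ) → ThmC' φ → ThmC' ψ
  | a1 : ∀ (I : Intervention S) (Y : S.Var) (y y' : S.Val Y), y ≠ y' →
      ThmC' (Form.impl (Form.int I (Form.eq Y y)) (Form.neg (Form.int I (Form.eq Y y'))))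
  | a2 : ∀ (I : Intervention S) (Y : S.Var),
      ThmC' (bigOr (((Finset.univ : Finset (S.Val Y)).toList).map
        (fun y => Form.int I (Form.eq Y y))))
  | a3 : ∀ (I : Intervention S) (Y Z : S.Var) (y : S.Val Y) (z : S.Val Z),
      ThmC' (Form.impl (Form.conj (Form.int I (Form.eq Y y)) (Form.int I (Form.eq Z z)))
        (Form.int (iUpd I Y y) (Form.eq Z z)))
  | a4 : ∀ (I : Intervention S) (Y : S.Var) (y : S.Val Y),
      ThmC' (Form.int (iUpd I Y y) (Form.eq Y y))
  | a5 : ∀ (I : Intervention S) (Y Z : S.Var) (y : S.Val Y) (z : S.Val Z), Y ≠ Z →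
      ThmC' (Form.impl
        (Form.conj (Form.int (iUpd I Y y) (Form.eq Z z)) (Form.int (iUpd I Z z) (Form.eq Y y)))
        (Form.int I (Form.eq Z z)))
  | a6 : ∀ (X : ℕ → S.Var) (k : ℕ),
      (∀ i : ℕ, i ≤ k → X i ≠ X (i + 1)) → X (k + 1) ≠ X 0 →
      ThmC' (Form.impl (chainConj X k) (Form.neg (leadsTo (X (k + 1)) (X 0))))
  | a7 : ∀ (I : Intervention S) (U : S.Var) (u : S.Val U), S.exo U → I U = none →
      ThmC' (Form.iffF (Form.int (iEmpty S) (Form.eq U u)) (Form.int I (Form.eq U u)))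

/-- Strong derivability from a set of premises in L′_C. -/
def ProvC' (Γ : Set (Form S)) (φ : Form S) : Prop :=
  ∃ l : List (Form S), (∀ ψ ∈ l, ψ ∈ Γ) ∧ ThmC' (impsFrom l φ)

/-- The language L′_C: Boolean combinations of formulas `[X⃗:=x⃗]Y=y`. -/
inductive IsC' : Form S → Prop where
  | intEq : ∀ (I : Intervention S) (Y : S.Var) (y : S.Val Y),
      IsC' (Form.int I (Form.eq Y y))
  | neg : ∀ {φ : Form S}, IsC' φ → IsC' (Form.neg φ)
  | conj : ∀ {φ ψ : Form S}, IsC' φ → IsC' ψ → IsC' (Form.conj φ ψ)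

/-- `Γ` is L′_C-consistent. -/
def ConsistentC' (Γ : Set (Form S)) : Prop :=
  ¬ ∃ φ : Form S, ProvC' Γ φ ∧ ProvC' Γ (Form.neg φ)

/-- `Γ` is a maximally L′_C-consistent set of L′_C formulas. -/
def MCS (Γ : Set (Form S)) : Prop :=
  (∀ φ ∈ Γ, IsC' φ) ∧ ConsistentC' Γ ∧ ∀ φ : Form S, IsC' φ → (φ ∈ Γ ∨ Form.neg φ ∈ Γ)

/-- The assignment setting every variable other than `V` to its value under `g`. -/
def fullIntOf {V : S.Var} (g : Others S V) : Intervention S :=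
  fun W => if h : W = V then none else some (g ⟨W, h⟩)

/-- The canonical structural functions of a maximally consistent set `Γ`:
`F^Γ_V(u⃗, y⃗) = v` iff `[U⃗:=u⃗, Y⃗:=y⃗]V=v ∈ Γ` (where `U⃗, Y⃗` list all variables
other than `V`); axioms A1 and A2 make this well defined. -/
noncomputable def canonF (Γ : Set (Form S)) : StructFuns S :=
  fun V g => Classical.epsilon (fun v : S.Val V => Form.int (fullIntOf g) (Form.eq V v) ∈ Γ)

/-- The canonical valuation of a maximally consistent set `Γ`:
`A^Γ(Z) = z` iff `[]Z=z ∈ Γ`; axioms A1 and A2 make this well defined. -/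
noncomputable def canonA (Γ : Set (Form S)) : Env S :=
  fun X => Classical.epsilon (fun x : S.Val X => Form.int (iEmpty S) (Form.eq X x) ∈ Γ)


section AuxProofs

variable {S : Sig} {Γ : Set (Form S)}

/-! ### Boolean evaluation helpers for tautologies -/

lemma eval_impl (v : Form S → Bool)
    (hn : ∀ ψ : Form S, v (Form.neg ψ) = !(v ψ))
    (hc : ∀ ψ χ : Form S, v (Form.conj ψ χ) = (v ψ && v χ)) (φ ψ : Form S) :
    v (Form.impl φ ψ) = (!(v φ) || v ψ) := by
  simp [Form.impl, hn, hc]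

lemma eval_or (v : Form S → Bool)
    (hn : ∀ ψ : Form S, v (Form.neg ψ) = !(v ψ))
    (hc : ∀ ψ χ : Form S, v (Form.conj ψ χ) = (v ψ && v χ)) (φ ψ : Form S) :
    v (Form.orF φ ψ) = (v φ || v ψ) := by
  simp [Form.orF, hn, hc]

lemma eval_bot (v : Form S → Bool)
    (hn : ∀ ψ : Form S, v (Form.neg ψ) = !(v ψ))
    (hc : ∀ ψ χ : Form S, v (Form.conj ψ χ) = (v ψ && v χ)) :
    v (botF S) = false := by
  simp [botF, hn, hc]

lemma eval_foldl_or (v : Form S → Bool)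
    (hn : ∀ ψ : Form S, v (Form.neg ψ) = !(v ψ))
    (hc : ∀ ψ χ : Form S, v (Form.conj ψ χ) = (v ψ && v χ)) :
    ∀ (l : List (Form S)) (φ : Form S),
      v (l.foldl Form.orF φ) = (v φ || l.any (fun ψ => v ψ))
  | [], φ => by simp
  | a :: l, φ => by
      simp only [List.foldl_cons, eval_foldl_or v hn hc l, eval_or v hn hc,
        List.any_cons, Bool.or_assoc]

lemma eval_bigOr (v : Form S → Bool)
    (hn : ∀ ψ : Form S, v (Form.neg ψ) = !(v ψ))
    (hc : ∀ ψ χ : Form S, v (Form.conj ψ χ) = (v ψ && v χ)) :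
    ∀ (l : List (Form S)), v (bigOr l) = l.any (fun ψ => v ψ)
  | [] => by simp [bigOr, eval_bot v hn hc]
  | a :: l => by simp [bigOr, eval_foldl_or v hn hc, List.any_cons]

lemma eval_impsFrom (v : Form S → Bool)
    (hn : ∀ ψ : Form S, v (Form.neg ψ) = !(v ψ))
    (hc : ∀ ψ χ : Form S, v (Form.conj ψ χ) = (v ψ && v χ)) :
    ∀ (l : List (Form S)) (φ : Form S),
      v (impsFrom l φ) = (!(l.all (fun ψ => v ψ)) || v φ)
  | [], φ => by simp [impsFrom]
  | a :: l, φ => by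
      simp only [impsFrom, eval_impl v hn hc, eval_impsFrom v hn hc l, List.all_cons]
      cases v a <;> simp

/-! ### Basic derivability lemmas -/

lemma prov_of_thm {φ : Form S} (h : ThmC' φ) : ProvC' Γ φ :=
  ⟨[], by simp, h⟩

lemma prov_mem {φ : Form S} (h : φ ∈ Γ) : ProvC' Γ φ := by
  refine ⟨[φ], by simp [h], ThmC'.taut ?_⟩
  intro v hn hc
  show v (Form.impl φ φ) = true
  rw [eval_impl v hn hc]
  cases v φ <;> rfl

lemma prov_mp {φ ψ : Form S} (h1 : ProvC' Γ (Form.impl φ ψ)) (h2 : ProvC' Γ φ) :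
    ProvC' Γ ψ := by
  obtain ⟨l₁, hl₁, t₁⟩ := h1
  obtain ⟨l₂, hl₂, t₂⟩ := h2
  refine ⟨l₁ ++ l₂, ?_, ?_⟩
  · intro x hx
    rcases List.mem_append.1 hx with h | h
    · exact hl₁ x h
    · exact hl₂ x h
  · have taut : Tauto (Form.impl (impsFrom l₁ (Form.impl φ ψ))
        (Form.impl (impsFrom l₂ φ) (impsFrom (l₁ ++ l₂) ψ))) := by
      intro v hn hc
      rw [eval_impl v hn hc, eval_impl v hn hc, eval_impsFrom v hn hc,
        eval_impsFrom v hn hc, eval_impsFrom v hn hc, eval_impl v hn hc,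
        List.all_append]
      cases l₁.all (fun ψ => v ψ) <;> cases l₂.all (fun ψ => v ψ) <;>
        cases v φ <;> cases v ψ <;> rfl
    exact ThmC'.mp (ThmC'.mp (ThmC'.taut taut) t₁) t₂

lemma mem_of_prov (hΓ : MCS Γ) {φ : Form S} (hφ : IsC' φ) (h : ProvC' Γ φ) : φ ∈ Γ := by
  rcases hΓ.2.2 φ hφ with hmem | hneg
  · exact hmem
  · exact absurd ⟨φ, h, prov_mem hneg⟩ hΓ.2.1

lemma conj_mem (hΓ : MCS Γ) {φ ψ : Form S} (ha : φ ∈ Γ) (hb : ψ ∈ Γ) :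
    Form.conj φ ψ ∈ Γ := by
  have taut : Tauto (Form.impl φ (Form.impl ψ (Form.conj φ ψ))) := by
    intro v hn hc
    rw [eval_impl v hn hc, eval_impl v hn hc, hc]
    cases v φ <;> cases v ψ <;> rfl
  exact mem_of_prov hΓ (IsC'.conj (hΓ.1 φ ha) (hΓ.1 ψ hb))
    (prov_mp (prov_mp (prov_of_thm (ThmC'.taut taut)) (prov_mem ha)) (prov_mem hb))

lemma isC'_foldl_or : ∀ (l : List (Form S)) (a : Form S), IsC' a →
    (∀ φ ∈ l, IsC' φ) → IsC' (l.foldl Form.orF a)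
  | [], a, ha, _ => ha
  | b :: l, a, ha, hl => by
      refine isC'_foldl_or l (Form.orF a b) ?_ (fun φ h => hl φ (List.mem_cons_of_mem _ h))
      exact IsC'.neg (IsC'.conj (IsC'.neg ha) (IsC'.neg (hl b (List.mem_cons_self))))

lemma isC'_bigOr {l : List (Form S)} (hne : l ≠ []) (hl : ∀ φ ∈ l, IsC' φ) :
    IsC' (bigOr l) := by
  cases l with
  | nil => exact absurd rfl hne
  | cons a l =>
      exact isC'_foldl_or l a (hl a (List.mem_cons_self))
        (fun φ h => hl φ (List.mem_cons_of_mem _ h))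

lemma bigOr_elim (hΓ : MCS Γ) {l : List (Form S)} (hl : ∀ φ ∈ l, IsC' φ)
    (h : bigOr l ∈ Γ) : ∃ φ ∈ l, φ ∈ Γ := by
  by_contra hno
  push_neg at hno
  have hneg : ∀ φ ∈ l, Form.neg φ ∈ Γ := fun φ hm =>
    (hΓ.2.2 φ (hl φ hm)).resolve_left (hno φ hm)
  have taut : Tauto (impsFrom (l.map Form.neg) (Form.neg (bigOr l))) := by
    intro v hn hc
    rw [eval_impsFrom v hn hc, hn, eval_bigOr v hn hc, List.all_map]
    have h2 : ∀ t : List (Form S),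
        (t.all ((fun ψ => v ψ) ∘ Form.neg)) = !(t.any fun ψ => v ψ) := by
      intro t
      induction t with
      | nil => simp
      | cons a t ih =>
          simp only [List.all_cons, List.any_cons, Function.comp, hn, ih, Bool.not_or]
    rw [h2]
    cases l.any fun ψ => v ψ <;> rfl
  have hprov : ProvC' Γ (Form.neg (bigOr l)) := by
    refine ⟨l.map Form.neg, ?_, ThmC'.taut taut⟩
    intro x hx
    obtain ⟨φ, hm, rfl⟩ := List.mem_map.1 hx
    exact hneg φ hm
  exact hΓ.2.1 ⟨bigOr l, prov_mem h, hprov⟩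

lemma bigOr_intro (hΓ : MCS Γ) {l : List (Form S)} {φ : Form S} (hmem : φ ∈ l)
    (hφΓ : φ ∈ Γ) (hl : ∀ ψ ∈ l, IsC' ψ) : bigOr l ∈ Γ := by
  have taut : Tauto (Form.impl φ (bigOr l)) := by
    intro v hn hc
    rw [eval_impl v hn hc, eval_bigOr v hn hc]
    cases hv : v φ
    · rfl
    · simp only [Bool.not_false, Bool.true_or, Bool.or_eq_true]
      right
      exact List.any_eq_true.2 ⟨φ, hmem, hv⟩
  exact mem_of_prov hΓ (isC'_bigOr (List.ne_nil_of_mem hmem) hl)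
    (prov_mp (prov_of_thm (ThmC'.taut taut)) (prov_mem hφΓ))

/-! ### The canonical model -/

lemma int_eq_exists (hΓ : MCS Γ) (I : Intervention S) (V : S.Var) :
    ∃ v : S.Val V, Form.int I (Form.eq V v) ∈ Γ := by
  set l : List (Form S) :=
    ((Finset.univ : Finset (S.Val V)).toList).map (fun y => Form.int I (Form.eq V y)) with hl
  have hlIsC : ∀ φ ∈ l, IsC' φ := by
    intro φ hφ
    obtain ⟨y, _, rfl⟩ := List.mem_map.1 hφ
    exact IsC'.intEq _ _ _
  have hlne : l ≠ [] := by
    have : (Classical.arbitrary (S.Val V)) ∈ (Finset.univ : Finset (S.Val V)).toList := by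
      simp
    exact List.ne_nil_of_mem (List.mem_map_of_mem this)
  have hmem : bigOr l ∈ Γ :=
    mem_of_prov hΓ (isC'_bigOr hlne hlIsC) (prov_of_thm (ThmC'.a2 I V))
  obtain ⟨φ, hφl, hφΓ⟩ := bigOr_elim hΓ hlIsC hmem
  obtain ⟨y, _, rfl⟩ := List.mem_map.1 hφl
  exact ⟨y, hφΓ⟩

lemma int_eq_unique (hΓ : MCS Γ) {I : Intervention S} {V : S.Var} {v v' : S.Val V}
    (h1 : Form.int I (Form.eq V v) ∈ Γ) (h2 : Form.int I (Form.eq V v') ∈ Γ) :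
    v = v' := by
  by_contra hne
  exact hΓ.2.1 ⟨Form.int I (Form.eq V v'), prov_mem h2,
    prov_mp (prov_of_thm (ThmC'.a1 I V v v' hne)) (prov_mem h1)⟩

lemma canonF_spec (hΓ : MCS Γ) (V : S.Var) (g : Others S V) :
    Form.int (fullIntOf g) (Form.eq V (canonF Γ V g)) ∈ Γ :=
  Classical.epsilon_spec (int_eq_exists hΓ (fullIntOf g) V)

lemma canonF_eq (hΓ : MCS Γ) {V : S.Var} {g : Others S V} {v : S.Val V}
    (h : Form.int (fullIntOf g) (Form.eq V v) ∈ Γ) : canonF Γ V g = v :=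
  int_eq_unique hΓ (canonF_spec hΓ V g) h

lemma canonA_spec (hΓ : MCS Γ) (X : S.Var) :
    Form.int (iEmpty S) (Form.eq X (canonA Γ X)) ∈ Γ :=
  Classical.epsilon_spec (int_eq_exists hΓ (iEmpty S) X)

/-! ### Complies -/

lemma upd_step (hΓ : MCS Γ) {I : Intervention S}
    (hI : ∀ W : S.Var, Form.int I (Form.eq W (canonA Γ W)) ∈ Γ) (Y : S.Var) :
    ∀ W : S.Var, Form.int (iUpd I Y (canonA Γ Y)) (Form.eq W (canonA Γ W)) ∈ Γ := by
  intro W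
  by_cases hWY : W = Y
  · subst hWY
    exact mem_of_prov hΓ (IsC'.intEq _ _ _) (prov_of_thm (ThmC'.a4 I W (canonA Γ W)))
  · have h3 := ThmC'.a3 I Y W (canonA Γ Y) (canonA Γ W)
    exact mem_of_prov hΓ (IsC'.intEq _ _ _)
      (prov_mp (prov_of_thm h3) (prov_mem (conj_mem hΓ (hI Y) (hI W))))

lemma foldl_mem (hΓ : MCS Γ) :
    ∀ (l : List S.Var) (I : Intervention S),
      (∀ W : S.Var, Form.int I (Form.eq W (canonA Γ W)) ∈ Γ) →
      ∀ W : S.Var,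
        Form.int (l.foldl (fun J Y => iUpd J Y (canonA Γ Y)) I) (Form.eq W (canonA Γ W)) ∈ Γ
  | [], I, hI, W => hI W
  | a :: l, I, hI, W =>
      foldl_mem hΓ l (iUpd I a (canonA Γ a)) (upd_step hΓ hI a) W

lemma foldl_iUpd_apply (A : Env S) :
    ∀ (l : List S.Var) (I : Intervention S) (W : S.Var),
      (l.foldl (fun J Y => iUpd J Y (A Y)) I) W = if W ∈ l then some (A W) else I W
  | [], I, W => by simp
  | a :: l, I, W => by
      rw [List.foldl_cons, foldl_iUpd_apply A l (iUpd I a (A a)) W]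
      by_cases hWl : W ∈ l
      · simp [hWl]
      · by_cases hWa : W = a
        · subst hWa
          simp [hWl, iUpd]
        · simp [hWl, hWa, iUpd, Function.update_of_ne hWa]

lemma canon_complies (hΓ : MCS Γ) : Complies (canonF Γ) (canonA Γ) := by
  intro V _
  set A := canonA Γ with hA
  set l : List S.Var := ((Finset.univ : Finset S.Var).filter (fun W => W ≠ V)).toList with hldef
  have hbase : ∀ W : S.Var, Form.int (iEmpty S) (Form.eq W (A W)) ∈ Γ :=
    fun W => canonA_spec hΓ W
  have hmem := foldl_mem hΓ l (iEmpty S) hbase V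
  have hIeq : l.foldl (fun J Y => iUpd J Y (A Y)) (iEmpty S) = fullIntOf (A.restrict V) := by
    funext W
    rw [foldl_iUpd_apply]
    by_cases hWV : W = V
    · subst hWV
      simp [hldef, fullIntOf, iEmpty]
    · simp [hldef, fullIntOf, hWV, Env.restrict]
  rw [hIeq] at hmem
  exact (canonF_eq hΓ hmem).symm

/-! ### Recursiveness -/

lemma dirAff_leadsTo (hΓ : MCS Γ) {X V : S.Var} (h : DirAff (canonF Γ) X V) :
    leadsTo X V ∈ Γ := by
  obtain ⟨-, hXV, g, x₁, x₂, hx, hv⟩ := h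
  set z : ∀ W : {W : S.Var // W ≠ X ∧ W ≠ V}, S.Val W.val :=
    fun W => g ⟨W.val, W.prop.2⟩ with hz
  have hint : ∀ x : S.Val X, ltInt X V z x = fullIntOf (Function.update g ⟨X, hXV⟩ x) := by
    intro x
    funext W
    by_cases h1 : W = X
    · subst h1
      rw [ltInt, dif_pos rfl]
      rw [fullIntOf]
      rw [dif_neg hXV]
      simp
    · rw [ltInt, dif_neg h1]
      by_cases h2 : W = V
      · subst h2
        rw [dif_pos rfl, fullIntOf, dif_pos rfl]
      · rw [dif_neg h2, fullIntOf, dif_neg h2]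
        have hne : (⟨W, h2⟩ : {X_1 : S.Var // X_1 ≠ V}) ≠ ⟨X, hXV⟩ := by
          intro hcontra
          exact h1 (congrArg Subtype.val hcontra)
        rw [Function.update_of_ne hne]
  set v₁ := canonF Γ V (Function.update g ⟨X, hXV⟩ x₁) with hv₁
  set v₂ := canonF Γ V (Function.update g ⟨X, hXV⟩ x₂) with hv₂
  have m₁ : Form.int (ltInt X V z x₁) (Form.eq V v₁) ∈ Γ := by
    rw [hint]; exact canonF_spec hΓ V _
  have m₂ : Form.int (ltInt X V z x₂) (Form.eq V v₂) ∈ Γ := by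
    rw [hint]; exact canonF_spec hΓ V _
  have hφΓ : Form.conj (Form.int (ltInt X V z x₁) (Form.eq V v₁))
      (Form.int (ltInt X V z x₂) (Form.eq V v₂)) ∈ Γ := conj_mem hΓ m₁ m₂
  set p : (∀ W : {W : S.Var // W ≠ X ∧ W ≠ V}, S.Val W.val) ×
      (S.Val X × S.Val X) × (S.Val V × S.Val V) := ⟨z, (x₁, x₂), (v₁, v₂)⟩ with hp
  have hpfilter : p ∈ (Finset.univ.filter
      (fun p : (∀ W : {W : S.Var // W ≠ X ∧ W ≠ V}, S.Val W.val) ×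
          (S.Val X × S.Val X) × (S.Val V × S.Val V) =>
        p.2.1.1 ≠ p.2.1.2 ∧ p.2.2.1 ≠ p.2.2.2)) := by
    refine Finset.mem_filter.2 ⟨Finset.mem_univ _, hx, hv⟩
  rw [leadsTo]
  refine bigOr_intro hΓ (l := _) (φ := Form.conj
      (Form.int (ltInt X V p.1 p.2.1.1) (Form.eq V p.2.2.1))
      (Form.int (ltInt X V p.1 p.2.1.2) (Form.eq V p.2.2.2))) ?_ hφΓ ?_
  · exact List.mem_map_of_mem (Finset.mem_toList.2 hpfilter)
  · intro ψ hψ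
    obtain ⟨q, _, rfl⟩ := List.mem_map.1 hψ
    exact IsC'.conj (IsC'.intEq _ _ _) (IsC'.intEq _ _ _)

lemma chain_mem (hΓ : MCS Γ) (f : ℕ → S.Var) :
    ∀ k : ℕ, (∀ i ≤ k, DirAff (canonF Γ) (f i) (f (i + 1))) → chainConj f k ∈ Γ
  | 0, h => dirAff_leadsTo hΓ (h 0 le_rfl)
  | k + 1, h => by
      rw [chainConj]
      exact conj_mem hΓ (chain_mem hΓ f k (fun i hi => h i (Nat.le_succ_of_le hi)))
        (dirAff_leadsTo hΓ (h (k + 1) le_rfl))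

lemma transGen_exists_fun {α : Type*} {r : α → α → Prop} {a b : α}
    (h : Relation.TransGen r a b) :
    ∃ (n : ℕ) (f : ℕ → α), f 0 = a ∧ f (n + 1) = b ∧ ∀ i ≤ n, r (f i) (f (i + 1)) := by
  induction h with
  | @single c hr =>
      refine ⟨0, fun i => if i = 0 then a else c, by simp, by simp, ?_⟩
      intro i hi
      interval_cases i
      simpa using hr
  | @tail b' c htg hr ih =>
      obtain ⟨n, f, hf0, hfn, hsteps⟩ := ih
      refine ⟨n + 1, fun i => if i ≤ n + 1 then f i else c, ?_, ?_, ?_⟩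
      · simp [hf0]
      · simp
      · intro i hi
        rcases Nat.lt_or_ge i (n + 1) with hlt | hge
        · have h1 : i ≤ n + 1 := le_of_lt hlt
          have h2 : i + 1 ≤ n + 1 := hlt
          simp only [if_pos h1, if_pos h2]
          exact hsteps i (Nat.lt_succ_iff.1 hlt)
        · have hieq : i = n + 1 := le_antisymm hi hge
          subst hieq
          beta_reduce
          rw [if_pos le_rfl, if_neg (by omega : ¬ n + 1 + 1 ≤ n + 1), hfn]
          exact hr

lemma canon_recursive (hΓ : MCS Γ) : RecursiveF (canonF Γ) := by
  intro a b hab hba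
  obtain ⟨n, f, hf0, hfn, hsteps⟩ := transGen_exists_fun (hab.trans hba)
  have hne : ∀ i ≤ n, f i ≠ f (i + 1) := by
    intro i hi
    obtain ⟨-, h, -⟩ := hsteps i hi
    exact h
  cases n with
  | zero =>
      exact hne 0 le_rfl (by rw [hfn, hf0])
  | succ m =>
      have hlast : f (m + 1 + 1) = f 0 := by rw [hfn, hf0]
      have hXk : f (m + 1) ≠ f 0 := by
        intro hc
        exact hne (m + 1) le_rfl (by rw [hlast, hc])
      have hchain : chainConj f m ∈ Γ :=
        chain_mem hΓ f m (fun i hi => hsteps i (Nat.le_succ_of_le hi))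
      have hlead : leadsTo (f (m + 1)) (f 0) ∈ Γ := by
        have := dirAff_leadsTo hΓ (hsteps (m + 1) le_rfl)
        rwa [hlast] at this
      have ha6 := ThmC'.a6 f m (fun i hi => hne i (Nat.le_succ_of_le hi)) hXk
      have hprovneg : ProvC' Γ (Form.neg (leadsTo (f (m + 1)) (f 0))) :=
        prov_mp (prov_of_thm ha6) (prov_mem hchain)
      exact hΓ.2.1 ⟨leadsTo (f (m + 1)) (f 0), prov_mem hlead, hprovneg⟩

end AuxProofs

/-- Theorem: the canonical structure of a maximally L′_C-consistent set is a
recursive causal model. -/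
theorem canonical_structure_is_recursive_causal_model (S : Sig)
    (Γ : Set (Form S)) (hΓ : MCS Γ) :
    Complies (canonF Γ) (canonA Γ) ∧ RecursiveF (canonF Γ) := by
  exact ⟨canon_complies hΓ, canon_recursive hΓ⟩
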